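/- Let q be an odd prime power. The number of a ∈ F_q with both a and a+1 nonzero squares is ⌊(q-3)/4⌋; the number with a a nonzero square and a+1 a nonsquare is ⌊(q+1)/4⌋; the number with a a nonsquare and a+1 a nonzero square is ⌊(q-1)/4⌋; and the number with both a and a+1 nonsquares is ⌊(q-1)/4⌋. -/

import Mathlib

open scoped Classical

section Aux

open Finset

variable {F : Type*} [Field F] [Fintype F]

/-- The key character sum. -/
lemma quadChar_shift_sum (hF : ringChar F ≠ 2) :
    ∑ a : F, quadraticChar F a * quadraticChar F (a + 1) = -1 := by
  classical
  have h1 : ∑ a : F, quadraticChar F a * quadraticChar F (a + 1)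
      = ∑ a ∈ univ \ {(0 : F)}, quadraticChar F a * quadraticChar F (a + 1) := by
    rw [Finset.sum_sdiff_eq_sub (by simp)]
    simp
  have h2 : ∀ a ∈ univ \ {(0 : F)},
      quadraticChar F a * quadraticChar F (a + 1) = quadraticChar F (1 + a⁻¹) := by
    intro a ha
    simp only [mem_sdiff, mem_singleton] at ha
    have ha0 : a ≠ 0 := ha.2
    have : quadraticChar F a * quadraticChar F (a + 1) = quadraticChar F (a * (a + 1)) := by
      rw [map_mul]
    rw [this]
    have : a * (a + 1) = a ^ 2 * (1 + a⁻¹) := by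
      field_simp
    rw [this, map_mul, quadraticChar_sq_one' ha0, one_mul]
  rw [h1, Finset.sum_congr rfl h2]
  have h3 : ∑ a ∈ univ \ {(0 : F)}, quadraticChar F (1 + a⁻¹)
      = ∑ b ∈ univ \ {(1 : F)}, quadraticChar F b := by
    apply Finset.sum_nbij' (fun a => 1 + a⁻¹) (fun b => (b - 1)⁻¹)
    · intro a ha
      simp only [mem_sdiff, mem_singleton, mem_univ, true_and] at ha ⊢
      intro h
      apply ha
      have h0 : a⁻¹ = 0 := by
        have := add_left_cancel (a := (1:F)) (by simpa using h)
        simpa using this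
      exact inv_eq_zero.mp h0
    · intro b hb
      simp only [mem_sdiff, mem_singleton, mem_univ, true_and] at hb ⊢
      intro h
      apply hb
      have := inv_eq_zero.mp h
      rwa [sub_eq_zero] at this
    · intro a ha
      simp only [mem_sdiff, mem_singleton, mem_univ, true_and] at ha
      field_simp
      ring
    · intro b hb
      simp only [mem_sdiff, mem_singleton, mem_univ, true_and] at hb
      have : b - 1 ≠ 0 := sub_ne_zero.mpr hb
      field_simp
      ring
    · intro a ha; rfl
  rw [h3, Finset.sum_sdiff_eq_sub (by simp), quadraticChar_sum_zero hF]
  simp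

lemma key_count' (hF : ringChar F ≠ 2) (ε δ : ℤ) (hε : ε = 1 ∨ ε = -1) (hδ : δ = 1 ∨ δ = -1) :
    4 * ((univ.filter (fun a : F =>
        quadraticChar F a = ε ∧ quadraticChar F (a + 1) = δ)).card : ℤ)
      = Fintype.card F - ε * δ - (1 + δ) - (1 + ε * quadraticChar F (-1)) := by
  classical
  have hε2 : ε * ε = 1 := by rcases hε with h | h <;> simp [h]
  have hδ2 : δ * δ = 1 := by rcases hδ with h | h <;> simp [h]
  have hshift : ∑ a : F, quadraticChar F (a + 1) = 0 := by
    rw [show (fun a : F => quadraticChar F (a + 1)) = fun a => quadraticChar F ((Equiv.addRight (1:F)) a) from rfl]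
    rw [Equiv.sum_comp (Equiv.addRight (1:F)) (fun b => quadraticChar F b)]
    exact quadraticChar_sum_zero hF
  have way1 : ∑ a : F, (1 + ε * quadraticChar F a) * (1 + δ * quadraticChar F (a + 1))
      = Fintype.card F - ε * δ := by
    have expand : ∀ a : F, (1 + ε * quadraticChar F a) * (1 + δ * quadraticChar F (a + 1))
        = 1 + ε * quadraticChar F a + δ * quadraticChar F (a + 1)
          + ε * δ * (quadraticChar F a * quadraticChar F (a + 1)) := by intro a; ring
    simp only [expand]
    rw [Finset.sum_add_distrib, Finset.sum_add_distrib, Finset.sum_add_distrib,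
      ← Finset.mul_sum, ← Finset.mul_sum, ← Finset.mul_sum,
      quadraticChar_sum_zero hF, hshift, quadChar_shift_sum hF]
    simp [Finset.card_univ]; ring
  have hm1 : (-1 : F) ≠ 0 := by simp
  have hptwise : ∀ a : F, (1 + ε * quadraticChar F a) * (1 + δ * quadraticChar F (a + 1))
      = (if quadraticChar F a = ε ∧ quadraticChar F (a + 1) = δ then (4:ℤ) else 0)
        + (if a = 0 then (1 + δ) else 0)
        + (if a = -1 then (1 + ε * quadraticChar F (-1)) else 0) := by
    intro a
    by_cases h0 : a = 0
    · subst h0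
      have h01 : (0:F) ≠ -1 := by
        intro h
        have : (1:F) = 0 := by linear_combination h
        exact one_ne_zero this
      have hcond : ¬((0:ℤ) = ε ∧ (1:ℤ) = δ) := by rintro ⟨h1, -⟩; rcases hε with he | he <;> omega
      simp only [quadraticChar_zero, zero_add, map_one]
      simp only [hcond, if_false, if_neg h01, if_pos trivial, eq_self_iff_true, if_true]
      ring
    by_cases h1 : a = -1
    · subst h1
      have hcond : ¬(quadraticChar F (-1) = ε ∧ (0:ℤ) = δ) := by
        rintro ⟨-, h2⟩; rcases hδ with hd | hd <;> omega
      simp only [show (-1:F) + 1 = 0 from by ring, quadraticChar_zero]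
      simp only [hcond, if_false, if_neg hm1, eq_self_iff_true, if_true]
      ring
    · have ha1 : a + 1 ≠ 0 := fun h => h1 (by linear_combination h)
      rw [if_neg h0, if_neg h1]
      rcases quadraticChar_dichotomy h0 with h | h <;>
        rcases quadraticChar_dichotomy ha1 with h' | h' <;>
          rcases hε with he | he <;> rcases hδ with hd | hd <;>
            simp [h, h', he, hd] <;> try ring
  calc 4 * ((univ.filter (fun a : F =>
        quadraticChar F a = ε ∧ quadraticChar F (a + 1) = δ)).card : ℤ)
      = ∑ a : F, (1 + ε * quadraticChar F a) * (1 + δ * quadraticChar F (a + 1)) - (1 + δ) - (1 + ε * quadraticChar F (-1)) := by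
        simp only [hptwise]
        rw [Finset.sum_add_distrib, Finset.sum_add_distrib]
        rw [Finset.sum_ite_eq' univ (0:F), Finset.sum_ite_eq' univ (-1:F)]
        simp [Finset.sum_ite, Finset.mul_sum]
        ring
    _ = Fintype.card F - ε * δ - (1 + δ) - (1 + ε * quadraticChar F (-1)) := by rw [way1]

end Aux

/-- Counting `a ∈ F_q` according to the square classes of `a` and `a+1`. -/
theorem card_square_pairs (F : Type*) [Field F] [Fintype F] (q : ℕ)
    (hq : Fintype.card F = q) (hodd : Odd q) :
    (Finset.univ.filter (fun a : F =>
        (a ≠ 0 ∧ IsSquare a) ∧ (a + 1 ≠ 0 ∧ IsSquare (a + 1)))).card = (q - 3) / 4 ∧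
    (Finset.univ.filter (fun a : F =>
        (a ≠ 0 ∧ IsSquare a) ∧ (a + 1 ≠ 0 ∧ ¬ IsSquare (a + 1)))).card = (q + 1) / 4 ∧
    (Finset.univ.filter (fun a : F =>
        (a ≠ 0 ∧ ¬ IsSquare a) ∧ (a + 1 ≠ 0 ∧ IsSquare (a + 1)))).card = (q - 1) / 4 ∧
    (Finset.univ.filter (fun a : F =>
        (a ≠ 0 ∧ ¬ IsSquare a) ∧ (a + 1 ≠ 0 ∧ ¬ IsSquare (a + 1)))).card = (q - 1) / 4 := by
  classical
  have hodd2 : q % 2 = 1 := Nat.odd_iff.mp hodd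
  have hF : ringChar F ≠ 2 := by
    intro h
    have h2 := (FiniteField.even_card_iff_char_two (F := F)).mp h
    rw [hq] at h2
    omega
  have conv1 : ∀ x : F, (x ≠ 0 ∧ IsSquare x) ↔ quadraticChar F x = 1 := by
    intro x
    constructor
    · rintro ⟨hx, hs⟩; exact (quadraticChar_one_iff_isSquare hx).mpr hs
    · intro h
      have hx : x ≠ 0 := fun h0 => by rw [h0, quadraticChar_zero] at h; norm_num at h
      exact ⟨hx, (quadraticChar_one_iff_isSquare hx).mp h⟩
  have conv2 : ∀ x : F, (x ≠ 0 ∧ ¬ IsSquare x) ↔ quadraticChar F x = -1 := by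
    intro x
    constructor
    · rintro ⟨hx, hs⟩; exact quadraticChar_neg_one_iff_not_isSquare.mpr hs
    · intro h
      have hx : x ≠ 0 := fun h0 => by rw [h0, quadraticChar_zero] at h; norm_num at h
      exact ⟨hx, quadraticChar_neg_one_iff_not_isSquare.mp h⟩
  have hchar : (q % 4 = 1 ∧ quadraticChar F (-1) = 1) ∨
      (q % 4 = 3 ∧ quadraticChar F (-1) = -1) := by
    by_cases h : q % 4 = 3
    · right
      refine ⟨h, ?_⟩
      rw [quadraticChar_neg_one_iff_not_isSquare, FiniteField.isSquare_neg_one_iff, hq]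
      omega
    · left
      refine ⟨by omega, ?_⟩
      rw [quadraticChar_one_iff_isSquare (by simp : (-1:F) ≠ 0),
        FiniteField.isSquare_neg_one_iff, hq]
      omega
  have e1 : (Finset.univ.filter (fun a : F =>
        (a ≠ 0 ∧ IsSquare a) ∧ (a + 1 ≠ 0 ∧ IsSquare (a + 1)))) =
      Finset.univ.filter (fun a : F =>
        quadraticChar F a = 1 ∧ quadraticChar F (a + 1) = 1) :=
    Finset.filter_congr fun x _ => and_congr (conv1 x) (conv1 (x + 1))
  have e2 : (Finset.univ.filter (fun a : F =>
        (a ≠ 0 ∧ IsSquare a) ∧ (a + 1 ≠ 0 ∧ ¬ IsSquare (a + 1)))) =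
      Finset.univ.filter (fun a : F =>
        quadraticChar F a = 1 ∧ quadraticChar F (a + 1) = -1) :=
    Finset.filter_congr fun x _ => and_congr (conv1 x) (conv2 (x + 1))
  have e3 : (Finset.univ.filter (fun a : F =>
        (a ≠ 0 ∧ ¬ IsSquare a) ∧ (a + 1 ≠ 0 ∧ IsSquare (a + 1)))) =
      Finset.univ.filter (fun a : F =>
        quadraticChar F a = -1 ∧ quadraticChar F (a + 1) = 1) :=
    Finset.filter_congr fun x _ => and_congr (conv2 x) (conv1 (x + 1))
  have e4 : (Finset.univ.filter (fun a : F =>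
        (a ≠ 0 ∧ ¬ IsSquare a) ∧ (a + 1 ≠ 0 ∧ ¬ IsSquare (a + 1)))) =
      Finset.univ.filter (fun a : F =>
        quadraticChar F a = -1 ∧ quadraticChar F (a + 1) = -1) :=
    Finset.filter_congr fun x _ => and_congr (conv2 x) (conv2 (x + 1))
  have k11 := key_count' hF 1 1 (Or.inl rfl) (Or.inl rfl)
  have k1m := key_count' hF 1 (-1) (Or.inl rfl) (Or.inr rfl)
  have km1 := key_count' hF (-1) 1 (Or.inr rfl) (Or.inl rfl)
  have kmm := key_count' hF (-1) (-1) (Or.inr rfl) (Or.inr rfl)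
  rw [hq] at k11 k1m km1 kmm
  refine ⟨?_, ?_, ?_, ?_⟩
  · rw [e1]
    rcases hchar with ⟨h4, hc⟩ | ⟨h4, hc⟩ <;> rw [hc] at k11 <;> omega
  · rw [e2]
    rcases hchar with ⟨h4, hc⟩ | ⟨h4, hc⟩ <;> rw [hc] at k1m <;> omega
  · rw [e3]
    rcases hchar with ⟨h4, hc⟩ | ⟨h4, hc⟩ <;> rw [hc] at km1 <;> omega
  · rw [e4]
    rcases hchar with ⟨h4, hc⟩ | ⟨h4, hc⟩ <;> rw [hc] at kmm <;> omega
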